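/- Let H be a complex Hilbert space, Ω ∈ H a unit vector, and ψ the vector state on B(H) given by ψ(X) = ⟨Ω, X Ω⟩. Let α be a *-algebra automorphism of B(H), let I be an index set, and for each a ∈ I let V_a be a unitary operator such that ψ(α⁻¹(X)) = ψ(V_a⁻¹ X V_a) for all X ∈ B(H). Define h_{ab} := ψ(V_a⁻¹ V_b). Then for all a, b, c ∈ I: the unitary V_a⁻¹ V_b preserves ψ (i.e. ψ(V_a⁻¹V_b X V_b⁻¹V_a) = ψ(X) for all X), |h_{ab}| = 1, and h_{ab} · h_{bc} = h_{ac}. -/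

import Mathlib

local notation "⟪" x ", " y "⟫" => @inner ℂ _ _ x y

lemma unitary_state_vector {H : Type*} [NormedAddCommGroup H] [InnerProductSpace ℂ H]
    [CompleteSpace H] (Ω : H) (hΩ : ‖Ω‖ = 1) (W : H →L[ℂ] H)
    (hWu : W ∈ unitary (H →L[ℂ] H))
    (hpres : ∀ X : H →L[ℂ] H, ⟪Ω, (W * X * star W) Ω⟫ = ⟪Ω, X Ω⟫) :
    W Ω = (⟪Ω, W Ω⟫ : ℂ) • Ω ∧ ‖(⟪Ω, W Ω⟫ : ℂ)‖ = 1 := by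
  have hΩ0 : Ω ≠ 0 := by intro h; rw [h, norm_zero] at hΩ; norm_num at hΩ
  have hΩin : (⟪Ω, Ω⟫ : ℂ) = 1 := by
    rw [inner_self_eq_norm_sq_to_K, hΩ]; norm_num
  have hWW : star W * W = 1 := (Unitary.mem_iff.mp hWu).1
  have hWW' : W * star W = 1 := (Unitary.mem_iff.mp hWu).2
  have hnormW : ‖W Ω‖ = 1 := by
    have h1 : (⟪W Ω, W Ω⟫ : ℂ) = ⟪Ω, Ω⟫ := by
      rw [← ContinuousLinearMap.adjoint_inner_right, ← ContinuousLinearMap.star_eq_adjoint]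
      have : (star W) (W Ω) = (star W * W) Ω := rfl
      rw [this, hWW]; rfl
    rw [@norm_eq_sqrt_re_inner ℂ, h1, ← @norm_eq_sqrt_re_inner ℂ, hΩ]
  set h : ℂ := ⟪Ω, W Ω⟫ with hh
  -- rank-one projection
  set P : H →L[ℂ] H := (innerSL ℂ Ω).smulRight Ω with hP
  have hPapp : ∀ x : H, P x = (⟪Ω, x⟫ : ℂ) • Ω := fun x => rfl
  have hstarWΩ : (⟪Ω, (star W) Ω⟫ : ℂ) = starRingEnd ℂ h := by
    rw [ContinuousLinearMap.star_eq_adjoint, ContinuousLinearMap.adjoint_inner_right,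
      ← inner_conj_symm]
  have key := hpres P
  have lhs : ((W * P * star W) Ω : H) = (⟪Ω, (star W) Ω⟫ : ℂ) • W Ω := by
    show W (P ((star W) Ω)) = _
    rw [hPapp, map_smul]
  rw [lhs, inner_smul_right, hstarWΩ, hPapp, inner_smul_right, hΩin, mul_one] at key
  rw [← hh] at key
  -- key : starRingEnd ℂ h * h = 1
  have hnorm : ‖h‖ = 1 := by
    have : (‖h‖ : ℂ) ^ 2 = 1 := by
      rw [← Complex.conj_mul']; exact key
    have h2 : ‖h‖ ^ 2 = 1 := by exact_mod_cast this
    nlinarith [norm_nonneg h]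
  refine ⟨?_, hnorm⟩
  have hCS : ‖(⟪Ω, W Ω⟫ : ℂ)‖ = ‖Ω‖ * ‖W Ω‖ := by rw [hΩ, hnormW, ← hh, hnorm]; ring
  have hW0 : W Ω ≠ 0 := fun h0 => by rw [h0, norm_zero] at hnormW; norm_num at hnormW
  obtain ⟨r, -, hr⟩ := (norm_inner_eq_norm_iff hΩ0 hW0).mp hCS
  have : h = r := by rw [hh, hr, inner_smul_right, hΩin, mul_one]
  rw [hr, this]

theorem cech_one_cocycle_from_implementing_unitaries
    {H : Type*} [NormedAddCommGroup H] [InnerProductSpace ℂ H] [CompleteSpace H]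
    {I : Type*} (Ω : H) (hΩ : ‖Ω‖ = 1)
    (ψ : (H →L[ℂ] H) → ℂ) (hψ : ∀ X, ψ X = inner ℂ Ω (X Ω))
    (α : (H →L[ℂ] H) ≃⋆ₐ[ℂ] (H →L[ℂ] H))
    (V : I → (H →L[ℂ] H))
    (hVu : ∀ a, V a ∈ unitary (H →L[ℂ] H))
    (hV : ∀ a X, ψ (α.symm X) = ψ (star (V a) * X * V a)) :
    ∀ a b c : I,
      (∀ X, ψ (star (V a) * V b * X * star (V b) * V a) = ψ X) ∧
      ‖ψ (star (V a) * V b)‖ = 1 ∧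
      ψ (star (V a) * V b) * ψ (star (V b) * V c) = ψ (star (V a) * V c) := by
  have key : ∀ a b X, ψ (star (V a) * X * V a) = ψ (star (V b) * X * V b) := by
    intro a b X; rw [← hV a X, ← hV b X]
  have preserve : ∀ a b X, ψ (star (V a) * V b * X * star (V b) * V a) = ψ X := by
    intro a b X
    have h1 := key a b (V b * X * star (V b))
    have hb1 : star (V b) * V b = 1 := (Unitary.mem_iff.mp (hVu b)).1
    calc ψ (star (V a) * V b * X * star (V b) * V a)
        = ψ (star (V a) * (V b * X * star (V b)) * V a) := by
          simp only [mul_assoc]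
      _ = ψ (star (V b) * (V b * X * star (V b)) * V b) := h1
      _ = ψ X := by
          congr 1
          calc star (V b) * (V b * X * star (V b)) * V b
              = (star (V b) * V b) * X * (star (V b) * V b) := by
                simp only [mul_assoc]
            _ = X := by rw [hb1, one_mul, mul_one]
  have Wfact : ∀ a b : I, (star (V a) * V b) Ω = (ψ (star (V a) * V b)) • Ω ∧
      ‖ψ (star (V a) * V b)‖ = 1 := by
    intro a b
    have hWu : star (V a) * V b ∈ unitary (H →L[ℂ] H) :=
      mul_mem (Unitary.star_mem (hVu a)) (hVu b)
    have hpres : ∀ X : H →L[ℂ] H,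
        ⟪Ω, ((star (V a) * V b) * X * star (star (V a) * V b)) Ω⟫ = ⟪Ω, X Ω⟫ := by
      intro X
      have := preserve a b X
      rw [hψ, hψ] at this
      convert this using 3
      simp only [star_mul, star_star, mul_assoc]
    have := unitary_state_vector Ω hΩ _ hWu hpres
    rwa [hψ (star (V a) * V b)]
  intro a b c
  refine ⟨preserve a b, (Wfact a b).2, ?_⟩
  have hab := (Wfact a b).1
  have hbc := (Wfact b c).1
  have hb1 : V b * star (V b) = 1 := (Unitary.mem_iff.mp (hVu b)).2
  have hVc : (V c) Ω = (ψ (star (V b) * V c)) • (V b) Ω := by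
    have := congrArg (fun x => (V b) x) hbc
    simp only [map_smul] at this
    have h2 : (V b) ((star (V b) * V c) Ω) = ((V b * star (V b)) * V c) Ω := by
      show (V b) ((star (V b)) ((V c) Ω)) = _; rfl
    rw [h2, hb1, one_mul] at this
    exact this
  have : (star (V a) * V c) Ω = (ψ (star (V a) * V b) * ψ (star (V b) * V c)) • Ω := by
    show (star (V a)) ((V c) Ω) = _
    rw [hVc, map_smul]
    have h3 : (star (V a)) ((V b) Ω) = (star (V a) * V b) Ω := rfl
    rw [h3, hab, smul_smul, mul_comm]
  rw [hψ (star (V a) * V c), this, inner_smul_right, inner_self_eq_norm_sq_to_K, hΩ]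
  norm_num
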